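/- arXiv:2304.10834 — 2 statements merged into one kernel-verified Lean document; each statement's English description precedes it below -/
import Mathlib

section
/- Let s : ℝ → ℝ be a nonnegative measurable function on the interval [-1/(2T), 1/(2T)] with T > 0 (the folded spectral SNR). Define SNR_FFE = 1/(T·∫ 1/(s(f)+1) df) − 1 and SNR_DFE = exp(T·∫ log(s(f)+1) df) − 1, where integrals are over [-1/(2T), 1/(2T)]. Then SNR_FFE ≤ SNR_DFE. -/
open MeasureTheory Real

/-- The infinitely-long FFE output SNR is at most the DFE output SNR
(harmonic mean vs geometric mean of `s+1` over the Nyquist interval). -/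
theorem snr_ffe_le_snr_dfe (T : ℝ) (hT : 0 < T) (s : ℝ → ℝ)
    (hmeas : Measurable s)
    (hnn : ∀ f ∈ Set.Icc (-(1 / (2 * T))) (1 / (2 * T)), 0 ≤ s f)
    (hint : IntegrableOn s (Set.Icc (-(1 / (2 * T))) (1 / (2 * T))))
    (hlog : IntegrableOn (fun f => Real.log (s f + 1))
      (Set.Icc (-(1 / (2 * T))) (1 / (2 * T)))) :
    1 / (T * ∫ f in Set.Icc (-(1 / (2 * T))) (1 / (2 * T)), 1 / (s f + 1)) - 1
      ≤ Real.exp (T * ∫ f in Set.Icc (-(1 / (2 * T))) (1 / (2 * T)),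
          Real.log (s f + 1)) - 1 := by
  set t : Set ℝ := Set.Icc (-(1 / (2 * T))) (1 / (2 * T)) with ht_def
  have hts : MeasurableSet t := measurableSet_Icc
  have hpos : ∀ f ∈ t, (0:ℝ) < s f + 1 := fun f hf => by linarith [hnn f hf]
  have hμt : volume t = ENNReal.ofReal (1 / T) := by
    have h2 : (1 / (2*T)) - (-(1/(2*T))) = 1/T := by
      field_simp
      ring
    rw [ht_def, Real.volume_Icc, h2]
  have hTinv : (0:ℝ) < 1 / T := by positivity
  have hμt0 : volume t ≠ 0 := by
    rw [hμt]
    exact (ENNReal.ofReal_pos.2 hTinv).ne'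
  have hμtT : volume t ≠ ⊤ := by rw [hμt]; exact ENNReal.ofReal_ne_top
  -- integrability of 1/(s+1) on t
  have hmeas1 : Measurable (fun x => 1 / (s x + 1)) := by
    exact measurable_const.div (hmeas.add_const 1)
  have h1int : IntegrableOn (fun x => 1 / (s x + 1)) t := by
    refine Integrable.mono' ((integrableOn_const_iff (C := (1:ℝ))).2 (Or.inr hμtT.lt_top))
      hmeas1.aestronglyMeasurable ?_
    filter_upwards [ae_restrict_mem hts] with x hx
    rw [Real.norm_eq_abs, abs_of_nonneg (le_of_lt (by exact div_pos one_pos (hpos x hx)))]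
    rw [div_le_one (hpos x hx)]
    linarith [hnn x hx]
  -- Jensen for exp with f = -log(s+1)
  have hEq : Set.EqOn (fun x => Real.exp (-Real.log (s x + 1))) (fun x => 1 / (s x + 1)) t := by
    intro x hx
    simp only
    rw [Real.exp_neg, Real.exp_log (hpos x hx), one_div]
  have hgi : IntegrableOn (Real.exp ∘ fun x => -Real.log (s x + 1)) t := by
    exact h1int.congr_fun (fun x hx => (hEq hx).symm) hts
  have hjensen := convexOn_exp.map_set_average_le continuous_exp.continuousOn isClosed_univ
    hμt0 hμtT (Filter.Eventually.of_forall (fun x => Set.mem_univ _)) hlog.neg hgi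
  rw [setAverage_eq, setAverage_eq, measureReal_def, hμt, ENNReal.toReal_ofReal hTinv.le] at hjensen
  have hinv : (1 / T)⁻¹ = T := by field_simp
  rw [hinv] at hjensen
  have hint_eq : ∫ x in t, Real.exp (-Real.log (s x + 1)) = ∫ x in t, 1 / (s x + 1) :=
    setIntegral_congr_fun hts hEq
  have hneg : ∫ x in t, -Real.log (s x + 1) = -∫ x in t, Real.log (s x + 1) := by
    exact integral_neg _
  simp only [smul_eq_mul, Function.comp, Pi.neg_apply] at hjensen
  rw [hint_eq, hneg, mul_neg] at hjensen
  -- now hjensen : exp (-(T * ∫ log(s+1))) ≤ T * ∫ 1/(s+1)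
  set A := T * ∫ x in t, 1 / (s x + 1) with hA
  set B := T * ∫ x in t, Real.log (s x + 1) with hB
  have hApos : 0 < A := lt_of_lt_of_le (Real.exp_pos _) hjensen
  have key : 1 / A ≤ Real.exp B := by
    rw [div_le_iff₀ hApos]
    calc (1:ℝ) = Real.exp (-B) * Real.exp B := by
          rw [← Real.exp_add]; simp
      _ ≤ A * Real.exp B := by
          exact mul_le_mul_of_nonneg_right hjensen (Real.exp_pos _).le
      _ = Real.exp B * A := mul_comm _ _
  linarith
end

section
/- If the nonnegative folded SNR s is not almost everywhere constant on [-1/(2T),1/(2T)], then SNR_FFE < SNR_DFE strictly. -/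
open MeasureTheory Real

/-- If the nonnegative folded SNR `s` is not almost everywhere constant on the
Nyquist interval, then `SNR_FFE < SNR_DFE` strictly. -/
theorem snr_ffe_lt_snr_dfe (T : ℝ) (hT : 0 < T) (s : ℝ → ℝ)
    (hmeas : Measurable s)
    (hnn : ∀ f ∈ Set.Icc (-(1 / (2 * T))) (1 / (2 * T)), 0 ≤ s f)
    (hint : IntegrableOn s (Set.Icc (-(1 / (2 * T))) (1 / (2 * T))))
    (hlog : IntegrableOn (fun f => Real.log (s f + 1))
      (Set.Icc (-(1 / (2 * T))) (1 / (2 * T))))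
    (hnc : ¬ ∃ c : ℝ, s =ᵐ[volume.restrict (Set.Icc (-(1 / (2 * T))) (1 / (2 * T)))]
      fun _ => c) :
    1 / (T * ∫ f in Set.Icc (-(1 / (2 * T))) (1 / (2 * T)), 1 / (s f + 1)) - 1
      < Real.exp (T * ∫ f in Set.Icc (-(1 / (2 * T))) (1 / (2 * T)),
          Real.log (s f + 1)) - 1 := by
  set I : Set ℝ := Set.Icc (-(1 / (2 * T))) (1 / (2 * T)) with hI
  set μ : Measure ℝ := volume.restrict I with hμ
  have hb : (0:ℝ) < 1 / (2 * T) := by positivity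
  have hvol : μ Set.univ = ENNReal.ofReal (1 / T) := by
    rw [hμ, Measure.restrict_apply MeasurableSet.univ, Set.univ_inter, hI,
      Real.volume_Icc]
    congr 1
    rw [sub_neg_eq_add, ← add_div]
    rw [show (2:ℝ) * T = T * 2 by ring, ← div_div]
    ring
  have hμfin : IsFiniteMeasure μ := ⟨by rw [hvol]; exact ENNReal.ofReal_lt_top⟩
  have haes : ∀ᵐ x ∂μ, x ∈ I := ae_restrict_mem measurableSet_Icc
  have hpos : ∀ᵐ x ∂μ, 0 < s x + 1 := haes.mono fun x hx => by linarith [hnn x hx]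
  have hgint : Integrable (fun x => -Real.log (s x + 1)) μ := hlog.neg
  have hcomp : (fun x => Real.exp (-Real.log (s x + 1))) =ᵐ[μ]
      fun x => 1 / (s x + 1) := by
    filter_upwards [hpos] with x hx
    rw [Real.exp_neg, Real.exp_log hx, one_div]
  have hintinv : Integrable (fun x => 1 / (s x + 1)) μ := by
    refine Integrable.mono' (integrable_const 1) ?_ ?_
    · exact ((hmeas.add measurable_const).inv.const_mul 1).aestronglyMeasurable
    · filter_upwards [hpos, haes] with x hx hx'
      have h0 := hnn x hx'
      rw [Real.norm_eq_abs, abs_of_nonneg (by positivity)]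
      rw [div_le_one hx]; linarith
  have hfi : Integrable (Real.exp ∘ fun x => -Real.log (s x + 1)) μ :=
    hintinv.congr hcomp.symm
  have hjen := strictConvexOn_exp.ae_eq_const_or_map_average_lt
    continuous_exp.continuousOn isClosed_univ
    (Filter.Eventually.of_forall fun _ => Set.mem_univ _) hgint hfi
  rcases hjen with h | h
  · exact absurd ⟨Real.exp (-(⨍ x, -Real.log (s x + 1) ∂μ)) - 1, by
      filter_upwards [h, hpos] with x hx hx2
      have hc : -Real.log (s x + 1) = (⨍ y, -Real.log (s y + 1) ∂μ) := hx
      have h2 : s x + 1 = Real.exp (-(⨍ y, -Real.log (s y + 1) ∂μ)) := by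
        rw [← Real.exp_log hx2]; congr 1; linarith
      show s x = _
      linarith⟩ hnc
  · have hTr : (μ Set.univ).toReal⁻¹ = T := by
      rw [hvol, ENNReal.toReal_ofReal (by positivity)]
      field_simp
    have havg1 : (⨍ x, -Real.log (s x + 1) ∂μ) = -(T * ∫ x, Real.log (s x + 1) ∂μ) := by
      rw [average_eq, measureReal_def, hTr, integral_neg, smul_eq_mul]; ring
    have havg2 : (⨍ x, Real.exp (-Real.log (s x + 1)) ∂μ)
        = T * ∫ x, 1 / (s x + 1) ∂μ := by
      rw [average_congr hcomp, average_eq, measureReal_def, hTr, smul_eq_mul]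
    rw [havg1] at h
    rw [havg2, Real.exp_neg] at h
    set A := ∫ x, 1 / (s x + 1) ∂μ
    set L := ∫ x, Real.log (s x + 1) ∂μ
    have hE : 0 < Real.exp (T * L) := Real.exp_pos _
    have hTA : 0 < T * A := lt_trans (by positivity) h
    have : 1 / (T * A) < Real.exp (T * L) := by
      rw [div_lt_iff₀ hTA]
      nlinarith [mul_lt_mul_of_pos_left h hE, Real.exp_neg (T * L),
        mul_inv_cancel₀ (ne_of_gt hE)]
    linarith
end
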